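/- Let K = T ∪ A be a DL-Lite_FR KB, let φ be any DL-Lite_FR assertion, and let ψ be an inclusion or functionality assertion. If there exist models J_φ and J_ψ of K with J_φ ⊭ φ and J_ψ ⊭ ψ, then there exists a single model J of K with J ⊭ φ and J ⊭ ψ. (Such a J can be obtained as a disjoint union J_φ^f ⊎ J_ψ^g for injective maps f, g : Δ → Δ with disjoint ranges such that f fixes the constants of K and of φ.) -/
import Mathlib


namespace DLLite

/-- The countably infinite domain of constants. -/
abbrev Δ : Type := ℕ
/-- Countably infinite set of concept names. -/
abbrev ConceptName : Type := ℕ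
/-- Countably infinite set of role names. -/
abbrev RoleName : Type := ℕ

/-- An interpretation assigns a set of domain elements to each concept name
and a binary relation to each role name; constants are interpreted as themselves. -/
structure Interp where
  concept : ConceptName → Set Δ
  role : RoleName → Set (Δ × Δ)

/-- Basic roles: `P` or `P⁻`. -/
inductive BasicRole where
  | pos (P : RoleName)
  | inv (P : RoleName)
deriving DecidableEq

def BasicRole.interp (R : BasicRole) (I : Interp) : Set (Δ × Δ) :=
  match R with
  | .pos P => I.role P
  | .inv P => {p | (p.2, p.1) ∈ I.role P}

/-- Basic concepts: `A` or `∃R`. -/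
inductive BasicConcept where
  | atom (A : ConceptName)
  | ex (R : BasicRole)
deriving DecidableEq

def BasicConcept.interp (B : BasicConcept) (I : Interp) : Set Δ :=
  match B with
  | .atom A => I.concept A
  | .ex R => {o | ∃ o', (o, o') ∈ R.interp I}

/-- DL-Lite_FR assertions: (negative) concept/role inclusions, functionality
assertions, and membership assertions. -/
inductive Assertion where
  | conceptIncl (B1 B2 : BasicConcept)
  | conceptDisj (B1 B2 : BasicConcept)
  | roleIncl (R1 R2 : BasicRole)
  | roleDisj (R1 R2 : BasicRole)
  | funct (R : BasicRole)
  | memberC (A : ConceptName) (a : Δ)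
  | memberR (P : RoleName) (a b : Δ)
deriving DecidableEq

/-- Satisfaction of an assertion by an interpretation. -/
def Interp.sat (I : Interp) : Assertion → Prop
  | .conceptIncl B1 B2 => B1.interp I ⊆ B2.interp I
  | .conceptDisj B1 B2 => B1.interp I ∩ B2.interp I = ∅
  | .roleIncl R1 R2 => R1.interp I ⊆ R2.interp I
  | .roleDisj R1 R2 => R1.interp I ∩ R2.interp I = ∅
  | .funct R => ∀ o o1 o2, (o, o1) ∈ R.interp I → (o, o2) ∈ R.interp I → o1 = o2
  | .memberC A a => a ∈ I.concept A
  | .memberR P a b => (a, b) ∈ I.role P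

/-- TBox assertions: inclusion or functionality assertions. -/
def Assertion.isTBox : Assertion → Prop
  | .memberC _ _ => False
  | .memberR _ _ _ => False
  | _ => True

/-- Membership (ABox) assertions. -/
def Assertion.isMembership : Assertion → Prop
  | .memberC _ _ => True
  | .memberR _ _ _ => True
  | _ => False

/-- The constants occurring in an assertion. -/
def Assertion.constants : Assertion → Set Δ
  | .memberC _ a => {a}
  | .memberR _ a b => {a, b}
  | _ => ∅

/-- A knowledge base: a finite set of assertions (TBox ∪ ABox). -/
abbrev KB := Finset Assertion

/-- The set of models of a KB. -/
def Mod (K : KB) : Set Interp := {I | ∀ a ∈ K, I.sat a}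

/-- Interpretations falsifying at least one assertion of `K`. -/
def NonMod (K : KB) : Set Interp := {I | ∃ a ∈ K, ¬ I.sat a}

/-- The constants occurring in a KB. -/
def KB.constants (K : KB) : Set Δ := ⋃ a ∈ K, Assertion.constants a

/-- Atoms: ground facts `A(o)` or `P(o,o')`. -/
inductive Atom where
  | c (A : ConceptName) (o : Δ)
  | r (P : RoleName) (o o' : Δ)
deriving DecidableEq

/-- The atom set of an interpretation. -/
def Interp.atoms (I : Interp) : Set Atom :=
  fun a => match a with
  | .c A o => o ∈ I.concept A
  | .r P o o' => (o, o') ∈ I.role P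

/-- Concept or role names (symbols). -/
inductive SName where
  | c (A : ConceptName)
  | r (P : RoleName)
deriving DecidableEq

/-- Atom-based set distance: symmetric difference of atom sets. -/
def distASub (I J : Interp) : Set Atom := symmDiff I.atoms J.atoms
/-- Atom-based cardinality distance. -/
noncomputable def distACard (I J : Interp) : ℕ∞ := (symmDiff I.atoms J.atoms).encard
/-- Symbol-based set distance: names interpreted differently. -/
def distSSub (I J : Interp) : Set SName :=
  fun n => match n with
  | .c A => I.concept A ≠ J.concept A
  | .r P => I.role P ≠ J.role P
/-- Symbol-based cardinality distance. -/
noncomputable def distSCard (I J : Interp) : ℕ∞ := (distSSub I J).encard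

/-- Global expansion w.r.t. a distance. -/
def expGlobD {D : Type} [PartialOrder D] (dist : Interp → Interp → D)
    (M N : Set Interp) : Set Interp :=
  {J | J ∈ N ∧ ∃ I ∈ M, ∀ I' ∈ M, ∀ J' ∈ N, ¬ dist I' J' < dist I J}

/-- Local expansion w.r.t. a distance. -/
def expLocD {D : Type} [PartialOrder D] (dist : Interp → Interp → D)
    (M N : Set Interp) : Set Interp :=
  {J | J ∈ N ∧ ∃ I ∈ M, ∀ J' ∈ N, ¬ dist I J' < dist I J}

inductive LocKind | glob | loc
inductive MeasKind | atoms | symbols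
inductive OrdKind | subset | card

/-- The expansion operator on sets of interpretations for each of the
eight model-based semantics `X^y_z`. -/
def expansionSet : LocKind → MeasKind → OrdKind → Set Interp → Set Interp → Set Interp
  | .glob, .atoms, .subset => expGlobD distASub
  | .glob, .atoms, .card => expGlobD distACard
  | .glob, .symbols, .subset => expGlobD distSSub
  | .glob, .symbols, .card => expGlobD distSCard
  | .loc, .atoms, .subset => expLocD distASub
  | .loc, .atoms, .card => expLocD distACard
  | .loc, .symbols, .subset => expLocD distSSub
  | .loc, .symbols, .card => expLocD distSCard

/-- KB expansion `K ⊕ N` under semantics `X^y_z`. -/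
def expandKB (X : LocKind) (y : MeasKind) (z : OrdKind) (K N : KB) : Set Interp :=
  expansionSet X y z (Mod K) (Mod N)

/-- KB contraction `K ⊖ N` under semantics `X^y_z`. -/
def contractKB (X : LocKind) (y : MeasKind) (z : OrdKind) (K N : KB) : Set Interp :=
  Mod K ∪ expansionSet X y z (Mod K) (NonMod N)

/-- Union of two interpretations. -/
def Interp.union (I1 I2 : Interp) : Interp :=
  ⟨fun A => I1.concept A ∪ I2.concept A, fun P => I1.role P ∪ I2.role P⟩

/-- The support set of an interpretation. -/
def Interp.support (I : Interp) : Set Δ :=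
  (⋃ A, I.concept A) ∪ (⋃ P, {o | ∃ o', (o, o') ∈ I.role P ∨ (o', o) ∈ I.role P})

/-- The image `I^f` of an interpretation under an (injective) map `f`. -/
def Interp.image (I : Interp) (f : Δ → Δ) : Interp :=
  ⟨fun A => f '' I.concept A, fun P => (fun p => (f p.1, f p.2)) '' I.role P⟩

/-- `h` is a homomorphism from `I` to `J`. -/
def IsHom (h : Δ → Δ) (I J : Interp) : Prop :=
  (∀ A, h '' I.concept A ⊆ J.concept A) ∧
  (∀ P o o', (o, o') ∈ I.role P → (h o, h o') ∈ J.role P)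

end DLLite

namespace DLLite

/-! ### Auxiliary lemmas -/

section Aux

lemma mem_support_of_concept {I : Interp} {A : ConceptName} {o : Δ}
    (h : o ∈ I.concept A) : o ∈ I.support :=
  Or.inl (Set.mem_iUnion.2 ⟨A, h⟩)

lemma mem_support_of_role {I : Interp} {P : RoleName} {o o' : Δ}
    (h : (o, o') ∈ I.role P) : o ∈ I.support ∧ o' ∈ I.support :=
  ⟨Or.inr (Set.mem_iUnion.2 ⟨P, ⟨o', Or.inl h⟩⟩),
   Or.inr (Set.mem_iUnion.2 ⟨P, ⟨o, Or.inr h⟩⟩)⟩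

lemma mem_support_of_basicRole {I : Interp} {R : BasicRole} {o o' : Δ}
    (h : (o, o') ∈ R.interp I) : o ∈ I.support ∧ o' ∈ I.support := by
  cases R with
  | pos P => exact mem_support_of_role h
  | inv P => exact (mem_support_of_role h).symm

lemma mem_support_of_basicConcept {I : Interp} {B : BasicConcept} {o : Δ}
    (h : o ∈ B.interp I) : o ∈ I.support := by
  cases B with
  | atom A => exact mem_support_of_concept h
  | ex R => obtain ⟨o', h'⟩ := h; exact (mem_support_of_basicRole h').1

lemma BasicRole.interp_union (R : BasicRole) (I J : Interp) :
    R.interp (I.union J) = R.interp I ∪ R.interp J := by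
  cases R with
  | pos P => rfl
  | inv P => ext ⟨o, o'⟩; simp [BasicRole.interp, Interp.union]

lemma BasicConcept.interp_union (B : BasicConcept) (I J : Interp) :
    B.interp (I.union J) = B.interp I ∪ B.interp J := by
  cases B with
  | atom A => rfl
  | ex R =>
    ext o
    simp only [BasicConcept.interp, BasicRole.interp_union, Set.mem_union,
      Set.mem_setOf_eq, exists_or]

lemma BasicRole.interp_image (R : BasicRole) (I : Interp) (f : Δ → Δ) :
    R.interp (I.image f) = (fun p => (f p.1, f p.2)) '' R.interp I := by
  cases R with
  | pos P => rfl
  | inv P =>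
    ext ⟨o, o'⟩
    constructor
    · rintro ⟨⟨x, y⟩, hxy, h⟩
      simp only [Prod.mk.injEq] at h
      exact ⟨(y, x), hxy, by simp [h.1, h.2]⟩
    · rintro ⟨⟨x, y⟩, hxy, h⟩
      simp only [Prod.mk.injEq] at h
      exact ⟨(y, x), hxy, by simp [h.1, h.2]⟩

lemma BasicConcept.interp_image (B : BasicConcept) (I : Interp) (f : Δ → Δ) :
    B.interp (I.image f) = f '' B.interp I := by
  cases B with
  | atom A => rfl
  | ex R =>
    ext o
    constructor
    · rintro ⟨o', h⟩
      rw [BasicRole.interp_image] at h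
      obtain ⟨⟨x, y⟩, hxy, h⟩ := h
      simp only [Prod.mk.injEq] at h
      exact ⟨x, ⟨y, hxy⟩, h.1⟩
    · rintro ⟨x, ⟨y, hxy⟩, hfx⟩
      refine ⟨f y, ?_⟩
      rw [BasicRole.interp_image]
      exact ⟨(x, y), hxy, by simp [hfx]⟩

lemma pair_map_injective {f : Δ → Δ} (hf : Function.Injective f) :
    Function.Injective (fun p : Δ × Δ => (f p.1, f p.2)) := by
  rintro ⟨a, b⟩ ⟨c, d⟩ h
  simp only [Prod.mk.injEq] at h
  exact Prod.ext (hf h.1) (hf h.2)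

lemma sat_image_iff {f : Δ → Δ} (hf : Function.Injective f) (I : Interp)
    (a : Assertion) (hc : ∀ c ∈ a.constants, f c = c) :
    (I.image f).sat a ↔ I.sat a := by
  cases a with
  | conceptIncl B1 B2 =>
    simp only [Interp.sat, BasicConcept.interp_image]
    exact Set.image_subset_image_iff hf
  | conceptDisj B1 B2 =>
    simp only [Interp.sat, BasicConcept.interp_image]
    rw [← Set.image_inter hf, Set.image_eq_empty]
  | roleIncl R1 R2 =>
    simp only [Interp.sat, BasicRole.interp_image]
    exact Set.image_subset_image_iff (pair_map_injective hf)
  | roleDisj R1 R2 =>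
    simp only [Interp.sat, BasicRole.interp_image]
    rw [← Set.image_inter (pair_map_injective hf), Set.image_eq_empty]
  | funct R =>
    simp only [Interp.sat, BasicRole.interp_image]
    constructor
    · intro h o o1 o2 h1 h2
      exact hf (h (f o) (f o1) (f o2) ⟨(o, o1), h1, rfl⟩ ⟨(o, o2), h2, rfl⟩)
    · rintro h o o1 o2 ⟨⟨x, y⟩, hxy, h1⟩ ⟨⟨x', y'⟩, hxy', h2⟩
      simp only [Prod.mk.injEq] at h1 h2
      have hx : x = x' := hf (h1.1.trans h2.1.symm)
      subst hx
      rw [← h1.2, ← h2.2, h x y y' hxy hxy']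
  | memberC A c =>
    have hfc : f c = c := hc c rfl
    simp only [Interp.sat, Interp.image]
    constructor
    · rintro ⟨x, hx, hfx⟩
      rwa [hf (hfx.trans hfc.symm)] at hx
    · intro h; exact ⟨c, h, hfc⟩
  | memberR P c d =>
    have hfc : f c = c := hc c (Or.inl rfl)
    have hfd : f d = d := hc d (Or.inr rfl)
    simp only [Interp.sat, Interp.image]
    constructor
    · rintro ⟨⟨x, y⟩, hxy, h⟩
      simp only [Prod.mk.injEq] at h
      rw [← hf (h.1.trans hfc.symm), ← hf (h.2.trans hfd.symm)]
      exact hxy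
    · intro h; exact ⟨(c, d), h, by simp [hfc, hfd]⟩

lemma support_image_subset (I : Interp) (f : Δ → Δ) :
    (I.image f).support ⊆ Set.range f := by
  intro o ho
  rcases ho with h | h
  · obtain ⟨A, hA⟩ := Set.mem_iUnion.1 h
    obtain ⟨x, _, hx⟩ := hA
    exact ⟨x, hx⟩
  · obtain ⟨P, ⟨o', h⟩⟩ := Set.mem_iUnion.1 h
    rcases h with h | h
    · obtain ⟨⟨x, y⟩, _, h⟩ := h
      simp only [Prod.mk.injEq] at h
      exact ⟨x, h.1⟩
    · obtain ⟨⟨x, y⟩, _, h⟩ := h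
      simp only [Prod.mk.injEq] at h
      exact ⟨y, h.2⟩

lemma sat_union {I J : Interp} (hd : Disjoint I.support J.support)
    {a : Assertion} (hI : I.sat a) (hJ : a.isTBox → J.sat a) :
    (I.union J).sat a := by
  have hdis : ∀ o, o ∈ I.support → o ∈ J.support → False := fun o h1 h2 =>
    Set.disjoint_left.1 hd h1 h2
  cases a with
  | conceptIncl B1 B2 =>
    simp only [Interp.sat, BasicConcept.interp_union]
    exact Set.union_subset_union hI (hJ trivial)
  | conceptDisj B1 B2 =>
    simp only [Interp.sat, BasicConcept.interp_union]
    rw [Set.eq_empty_iff_forall_notMem]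
    intro o ho
    rw [Set.mem_inter_iff] at ho
    obtain ⟨h1 | h1, h2 | h2⟩ := ho
    · exact Set.eq_empty_iff_forall_notMem.1 hI o ⟨h1, h2⟩
    · exact hdis o (mem_support_of_basicConcept h1) (mem_support_of_basicConcept h2)
    · exact hdis o (mem_support_of_basicConcept h2) (mem_support_of_basicConcept h1)
    · exact Set.eq_empty_iff_forall_notMem.1 (hJ trivial) o ⟨h1, h2⟩
  | roleIncl R1 R2 =>
    simp only [Interp.sat, BasicRole.interp_union]
    exact Set.union_subset_union hI (hJ trivial)
  | roleDisj R1 R2 =>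
    simp only [Interp.sat, BasicRole.interp_union]
    rw [Set.eq_empty_iff_forall_notMem]
    rintro ⟨o, o'⟩ ho
    rw [Set.mem_inter_iff] at ho
    obtain ⟨h1 | h1, h2 | h2⟩ := ho
    · exact Set.eq_empty_iff_forall_notMem.1 hI (o, o') ⟨h1, h2⟩
    · exact hdis o (mem_support_of_basicRole h1).1 (mem_support_of_basicRole h2).1
    · exact hdis o (mem_support_of_basicRole h2).1 (mem_support_of_basicRole h1).1
    · exact Set.eq_empty_iff_forall_notMem.1 (hJ trivial) (o, o') ⟨h1, h2⟩
  | funct R =>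
    intro o o1 o2 h1 h2
    rw [BasicRole.interp_union] at h1 h2
    rcases h1 with h1 | h1 <;> rcases h2 with h2 | h2
    · exact hI o o1 o2 h1 h2
    · exact absurd (mem_support_of_basicRole h2).1
        (fun h => hdis o (mem_support_of_basicRole h1).1 h)
    · exact absurd (mem_support_of_basicRole h1).1
        (fun h => hdis o (mem_support_of_basicRole h2).1 h)
    · exact hJ trivial o o1 o2 h1 h2
  | memberC A c => exact Or.inl hI
  | memberR P c d => exact Or.inl hI

lemma notsat_union {I J : Interp} (hd : Disjoint I.support J.support)
    {a : Assertion} (hc : ∀ c ∈ a.constants, c ∉ J.support)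
    (h : ¬ I.sat a) : ¬ (I.union J).sat a := by
  have hdis : ∀ o, o ∈ I.support → o ∈ J.support → False := fun o h1 h2 =>
    Set.disjoint_left.1 hd h1 h2
  cases a with
  | conceptIncl B1 B2 =>
    obtain ⟨o, ho1, ho2⟩ := Set.not_subset.1 h
    intro hsat
    have hmem := hsat (by rw [BasicConcept.interp_union]; exact Or.inl ho1)
    rw [BasicConcept.interp_union] at hmem
    rcases hmem with h' | h'
    · exact ho2 h'
    · exact hdis o (mem_support_of_basicConcept ho1) (mem_support_of_basicConcept h')
  | conceptDisj B1 B2 =>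
    intro hsat
    apply h
    show B1.interp I ∩ B2.interp I = ∅
    rw [Set.eq_empty_iff_forall_notMem]
    intro o ho
    exact Set.eq_empty_iff_forall_notMem.1 hsat o
      (by rw [BasicConcept.interp_union, BasicConcept.interp_union]; exact Set.mem_inter (Or.inl ho.1) (Or.inl ho.2))
  | roleIncl R1 R2 =>
    obtain ⟨⟨o, o'⟩, ho1, ho2⟩ := Set.not_subset.1 h
    intro hsat
    have hmem := hsat (by rw [BasicRole.interp_union]; exact Or.inl ho1)
    rw [BasicRole.interp_union] at hmem
    rcases hmem with h' | h'
    · exact ho2 h'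
    · exact hdis o (mem_support_of_basicRole ho1).1 (mem_support_of_basicRole h').1
  | roleDisj R1 R2 =>
    intro hsat
    apply h
    show R1.interp I ∩ R2.interp I = ∅
    rw [Set.eq_empty_iff_forall_notMem]
    intro p hp
    exact Set.eq_empty_iff_forall_notMem.1 hsat p
      (by rw [BasicRole.interp_union, BasicRole.interp_union]; exact Set.mem_inter (Or.inl hp.1) (Or.inl hp.2))
  | funct R =>
    simp only [Interp.sat, not_forall] at h ⊢
    obtain ⟨o, o1, o2, h1, h2, hne⟩ := h
    exact ⟨o, o1, o2, by rw [BasicRole.interp_union]; exact Or.inl h1,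
      by rw [BasicRole.interp_union]; exact Or.inl h2, hne⟩
  | memberC A c =>
    rintro (h' | h')
    · exact h h'
    · exact hc c rfl (mem_support_of_concept h')
  | memberR P c d =>
    rintro (h' | h')
    · exact h h'
    · exact hc c (Or.inl rfl) (mem_support_of_role h').1

lemma union_comm (I J : Interp) : I.union J = J.union I := by
  simp only [Interp.union]
  congr 1 <;> funext x <;> exact Set.union_comm _ _

lemma constants_empty_of_isTBox {a : Assertion} (h : a.isTBox) :
    a.constants = ∅ := by
  cases a <;> first | rfl | exact absurd h (by simp [Assertion.isTBox])

/-- Bound on the constants of an assertion. -/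
def abound : Assertion → ℕ
  | .memberC _ a => a + 1
  | .memberR _ a b => max a b + 1
  | _ => 0

lemma lt_abound {a : Assertion} {c : Δ} (h : c ∈ a.constants) : c < abound a := by
  cases a with
  | memberC A d => rw [h]; exact Nat.lt_succ_self _
  | memberR P d e =>
    rcases h with h | h
    · subst h
      exact Nat.lt_succ_of_le (le_max_left _ _)
    · simp only [Set.mem_singleton_iff] at h; subst h
      exact Nat.lt_succ_of_le (le_max_right _ _)
  | _ => exact absurd h (Set.notMem_empty c)

end Aux

/-- If a DL-Lite_FR KB `K` has a model falsifying `φ` and a model falsifying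
the inclusion or functionality assertion `ψ`, then it has a single model
falsifying both. -/
theorem exists_model_falsifying_both (K : KB) (φ ψ : Assertion)
    (hψ : ψ.isTBox)
    (Jφ : Interp) (hJφ : Jφ ∈ Mod K) (hφ' : ¬ Jφ.sat φ)
    (Jψ : Interp) (hJψ : Jψ ∈ Mod K) (hψ' : ¬ Jψ.sat ψ) :
    ∃ J ∈ Mod K, ¬ J.sat φ ∧ ¬ J.sat ψ := by
  classical
  -- a bound above all constants of K and φ
  obtain ⟨b, hbK, hbφ⟩ : ∃ b : ℕ, (∀ a ∈ K, ∀ c ∈ a.constants, c < b) ∧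
      (∀ c ∈ φ.constants, c < b) := by
    refine ⟨max (K.sup abound) (abound φ), ?_, ?_⟩
    · intro a ha c hc
      exact lt_of_lt_of_le (lt_of_lt_of_le (lt_abound hc) (Finset.le_sup ha))
        (le_max_left _ _)
    · intro c hc
      exact lt_of_lt_of_le (lt_abound hc) (le_max_right _ _)
  -- two injections with disjoint ranges, the first fixing constants below b
  obtain ⟨f, g, hfinj, hginj, hffix, hrange⟩ :
      ∃ f g : ℕ → ℕ, Function.Injective f ∧ Function.Injective g ∧
        (∀ c, c < b → f c = c) ∧ (∀ n m, f n ≠ g m) := by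
    refine ⟨fun n => if n < b then n else b + 2 * (n - b), fun n => b + 2 * n + 1,
      ?_, ?_, ?_, ?_⟩
    · intro n1 n2 h
      simp only at h
      split_ifs at h <;> omega
    · intro n1 n2 h
      simp only at h
      omega
    · intro c hc; simp [hc]
    · intro n m h
      simp only at h
      split_ifs at h <;> omega
  -- the two image interpretations
  set Iφ : Interp := Jφ.image f with hIφ
  set Iψ : Interp := Jψ.image g with hIψ
  have hdisj : Disjoint Iφ.support Iψ.support := by
    rw [Set.disjoint_left]
    intro o h1 h2
    obtain ⟨n, hn⟩ := support_image_subset _ _ h1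
    obtain ⟨m, hm⟩ := support_image_subset _ _ h2
    exact hrange n m (hn.trans hm.symm)
  have hlt_not_supp : ∀ c, c < b → c ∉ Iψ.support := by
    intro c hc hsup
    obtain ⟨m, hm⟩ := support_image_subset _ _ hsup
    exact hrange c m ((hffix c hc).trans hm.symm)
  refine ⟨Iφ.union Iψ, ?_, ?_, ?_⟩
  · -- model of K
    intro a ha
    by_cases hT : a.isTBox
    · have hce := constants_empty_of_isTBox hT
      refine sat_union hdisj ?_ (fun _ => ?_)
      · exact (sat_image_iff hfinj Jφ a (by rw [hce]; simp)).2 (hJφ a ha)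
      · exact (sat_image_iff hginj Jψ a (by rw [hce]; simp)).2 (hJψ a ha)
    · refine sat_union hdisj ?_ (fun h => absurd h hT)
      exact (sat_image_iff hfinj Jφ a
        (fun c hc => hffix c (hbK a ha c hc))).2 (hJφ a ha)
  · -- falsifies φ
    refine notsat_union hdisj ?_ ?_
    · exact fun c hc => hlt_not_supp c (hbφ c hc)
    · exact fun h => hφ' ((sat_image_iff hfinj Jφ φ
        (fun c hc => hffix c (hbφ c hc))).1 h)
  · -- falsifies ψ
    rw [union_comm]
    refine notsat_union hdisj.symm ?_ ?_
    · rw [constants_empty_of_isTBox hψ]; simp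
    · exact fun h => hψ' ((sat_image_iff hginj Jψ ψ
        (by rw [constants_empty_of_isTBox hψ]; simp)).1 h)

end DLLite
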